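/- For real a, b with |a| < 1 and |b| < 1, (1/2π) ∫_{−π}^{π} [2(cos ω − a)] / [(1 + a² − 2a cos ω)(1 + b² − 2b cos ω)] dω = 2b / ((1 − ab)(1 − b²)). -/

import Mathlib

open Real

lemma Ppos {r : ℝ} (hr : |r| < 1) (ω : ℝ) : 0 < 1 + r ^ 2 - 2 * r * Real.cos ω := by
  have h3 : r * Real.cos ω ≤ |r| := by
    calc r * Real.cos ω ≤ |r * Real.cos ω| := le_abs_self _
    _ = |r| * |Real.cos ω| := abs_mul _ _
    _ ≤ |r| * 1 := mul_le_mul_of_nonneg_left (Real.abs_cos_le_one ω) (abs_nonneg r)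
    _ = |r| := mul_one _
  nlinarith [mul_pos (sub_pos.mpr hr) (sub_pos.mpr hr), sq_abs r]

lemma Dpos {r : ℝ} (hr : |r| < 1) (ω : ℝ) : 0 < 1 - r * Real.cos ω := by
  have h3 : r * Real.cos ω ≤ |r| := by
    calc r * Real.cos ω ≤ |r * Real.cos ω| := le_abs_self _
    _ = |r| * |Real.cos ω| := abs_mul _ _
    _ ≤ |r| * 1 := mul_le_mul_of_nonneg_left (Real.abs_cos_le_one ω) (abs_nonneg r)
    _ = |r| := mul_one _
  linarith

lemma hasDerivAt_A {r : ℝ} (hr : |r| < 1) (ω : ℝ) :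
    HasDerivAt (fun x => Real.arctan (r * Real.sin x / (1 - r * Real.cos x)))
      (r * (Real.cos ω - r) / (1 + r ^ 2 - 2 * r * Real.cos ω)) ω := by
  have hd := Dpos hr ω
  have hP := Ppos hr ω
  have hu : HasDerivAt (fun x => r * Real.sin x / (1 - r * Real.cos x))
      ((r * Real.cos ω * (1 - r * Real.cos ω) - r * Real.sin ω * (r * Real.sin ω)) /
        (1 - r * Real.cos ω) ^ 2) ω := by
    exact (((Real.hasDerivAt_sin ω).const_mul r).div
      (((Real.hasDerivAt_cos ω).const_mul r).neg.const_add 1) hd.ne') |>.congr_deriv (by simp only [Pi.neg_apply]; ring)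
  have h := hu.arctan
  convert h using 1
  have hs := Real.sin_sq_add_cos_sq ω
  have key : 1 + (r * sin ω / (1 - r * cos ω)) ^ 2 = (1 + r ^ 2 - 2 * r * Real.cos ω) / (1 - r * cos ω) ^ 2 := by
    field_simp
    linear_combination r ^ 2 * hs
  rw [key, one_div_div, div_mul_div_comm, mul_comm ((1 - r * cos ω) ^ 2),
    mul_div_mul_right _ _ (pow_ne_zero 2 hd.ne')]
  congr 1
  linear_combination r ^ 2 * hs

lemma A_endpoint {r : ℝ} (ω : ℝ) (h : Real.sin ω = 0) :
    Real.arctan (r * Real.sin ω / (1 - r * Real.cos ω)) = 0 := by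
  simp [h]

theorem projection_coefficient (a b : ℝ) (ha : |a| < 1) (hb : |b| < 1) :
    (1 / (2 * π)) *
      ∫ ω in (-π)..π,
        2 * (Real.cos ω - a) /
          ((1 + a ^ 2 - 2 * a * Real.cos ω) * (1 + b ^ 2 - 2 * b * Real.cos ω))
      = 2 * b / ((1 - a * b) * (1 - b ^ 2)) := by
  have hπ : (0:ℝ) < π := Real.pi_pos
  have hab1 : (0:ℝ) < 1 - a * b := by
    have : a * b ≤ |a * b| := le_abs_self _
    rw [abs_mul] at this
    nlinarith [abs_nonneg a, abs_nonneg b]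
  have h1b : (0:ℝ) < 1 - b ^ 2 := by
    have := sq_abs b; nlinarith [abs_nonneg b]
  have h1a : (0:ℝ) < 1 - a ^ 2 := by
    have := sq_abs a; nlinarith [abs_nonneg a]
  have hcont : Continuous fun ω => 2 * (Real.cos ω - a) /
      ((1 + a ^ 2 - 2 * a * Real.cos ω) * (1 + b ^ 2 - 2 * b * Real.cos ω)) := by
    apply Continuous.div (by continuity) (by continuity)
    intro ω
    exact (mul_pos (Ppos ha ω) (Ppos hb ω)).ne'
  have hint : IntervalIntegrable (fun ω => 2 * (Real.cos ω - a) /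
      ((1 + a ^ 2 - 2 * a * Real.cos ω) * (1 + b ^ 2 - 2 * b * Real.cos ω)))
      MeasureTheory.volume (-π) π := hcont.intervalIntegrable _ _
  by_cases hab : a = b
  · -- equal case
    subst hab
    set F : ℝ → ℝ := fun ω =>
      (2 / (1 - a ^ 2)) * (Real.sin ω / (1 + a ^ 2 - 2 * a * Real.cos ω)) +
      (2 * a / (1 - a ^ 2) ^ 2) *
        (ω + 2 * Real.arctan (a * Real.sin ω / (1 - a * Real.cos ω))) with hF
    have hderiv : ∀ ω ∈ Set.uIcc (-π) π, HasDerivAt F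
        (2 * (Real.cos ω - a) /
          ((1 + a ^ 2 - 2 * a * Real.cos ω) * (1 + a ^ 2 - 2 * a * Real.cos ω))) ω := by
      intro ω _
      have hP := Ppos ha ω
      have hs := Real.sin_sq_add_cos_sq ω
      have hG : HasDerivAt (fun x => Real.sin x / (1 + a ^ 2 - 2 * a * Real.cos x))
          (((1 + a ^ 2) * Real.cos ω - 2 * a) / (1 + a ^ 2 - 2 * a * Real.cos ω) ^ 2) ω := by
        have hden : HasDerivAt (fun x => 1 + a ^ 2 - 2 * a * Real.cos x)
            (-(2 * a * -Real.sin ω)) ω :=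
          ((Real.hasDerivAt_cos ω).const_mul (2 * a)).const_sub (1 + a ^ 2)
        have h2 := (Real.hasDerivAt_sin ω).div hden hP.ne'
        refine h2.congr_deriv ?_
        congr 1
        linear_combination (-(2 : ℝ) * a) * hs
      have hA := hasDerivAt_A ha ω
      have hcomb := ((hG.const_mul (2 / (1 - a ^ 2))).add
        (((hasDerivAt_id ω).add ((hA.const_mul (2 : ℝ)))).const_mul (2 * a / (1 - a ^ 2) ^ 2)))
      refine hcomb.congr_deriv ?_
      field_simp
      ring
    rw [intervalIntegral.integral_eq_sub_of_hasDerivAt hderiv hint]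
    have e1 : F π = (2 * a / (1 - a ^ 2) ^ 2) * π := by
      simp [hF, Real.sin_pi]
    have e2 : F (-π) = (2 * a / (1 - a ^ 2) ^ 2) * (-π) := by
      simp [hF, Real.sin_pi]
    rw [e1, e2]
    field_simp
    ring
  · -- distinct case
    have hd : a - b ≠ 0 := sub_ne_zero.mpr hab
    set F : ℝ → ℝ := fun ω =>
      (2 / ((a - b) * (1 - a * b))) *
        (Real.arctan (a * Real.sin ω / (1 - a * Real.cos ω)) -
         Real.arctan (b * Real.sin ω / (1 - b * Real.cos ω))) +
      (2 * b / ((1 - a * b) * (1 - b ^ 2))) *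
        (ω + 2 * Real.arctan (b * Real.sin ω / (1 - b * Real.cos ω))) with hF
    have hderiv : ∀ ω ∈ Set.uIcc (-π) π, HasDerivAt F
        (2 * (Real.cos ω - a) /
          ((1 + a ^ 2 - 2 * a * Real.cos ω) * (1 + b ^ 2 - 2 * b * Real.cos ω))) ω := by
      intro ω _
      have hPa := Ppos ha ω
      have hPb := Ppos hb ω
      have hAa := hasDerivAt_A ha ω
      have hAb := hasDerivAt_A hb ω
      have hcomb := (((hAa.sub hAb).const_mul (2 / ((a - b) * (1 - a * b)))).add
        (((hasDerivAt_id ω).add (hAb.const_mul (2 : ℝ))).const_mul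
          (2 * b / ((1 - a * b) * (1 - b ^ 2)))))
      refine hcomb.congr_deriv ?_
      field_simp
      ring
    rw [intervalIntegral.integral_eq_sub_of_hasDerivAt hderiv hint]
    have e1 : F π = (2 * b / ((1 - a * b) * (1 - b ^ 2))) * π := by
      simp [hF, Real.sin_pi]
    have e2 : F (-π) = (2 * b / ((1 - a * b) * (1 - b ^ 2))) * (-π) := by
      simp [hF, Real.sin_pi]
    rw [e1, e2]
    field_simp
    ring
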